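/- Let B be a Noetherian ring and let A be an algebra generated over B by elements x_1,...,x_m such that each x_i normalises B and for all i ≤ j there exist units q_{ij} with x_i x_j = q_{ij} x_j x_i. Then A is Noetherian. -/

import Mathlib

namespace QComm

variable {R A : Type*} [Ring R] [Ring A]

/-- The additive subgroup `{ x^n * f c | c : R }`. -/
def Qg (f : R →+* A) (x : A) (n : ℕ) : AddSubgroup A :=
  AddMonoidHom.range
    { toFun := fun c : R => x ^ n * f c
      map_zero' := by simp
      map_add' := fun a b => by simp [mul_add] }

lemma mem_Qg {f : R →+* A} {x : A} {n : ℕ} {a : A} :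
    a ∈ Qg f x n ↔ ∃ c, x ^ n * f c = a := AddMonoidHom.mem_range

/-- Filtration: `P f x n` is sums of `x^i * f c` with `i < n`. -/
def P (f : R →+* A) (x : A) : ℕ → AddSubgroup A
  | 0 => ⊥
  | n + 1 => P f x n ⊔ Qg f x n

lemma P_le_succ (f : R →+* A) (x : A) (n : ℕ) : P f x n ≤ P f x (n + 1) := by
  show P f x n ≤ P f x n ⊔ Qg f x n
  exact le_sup_left

lemma P_mono (f : R →+* A) (x : A) : Monotone (P f x) :=
  monotone_nat_of_le_succ (P_le_succ f x)

lemma mem_P_succ {f : R →+* A} {x : A} {n : ℕ} {a : A} :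
    a ∈ P f x (n + 1) ↔ ∃ p ∈ P f x n, ∃ c, p + x ^ n * f c = a := by
  show a ∈ P f x n ⊔ Qg f x n ↔ _
  rw [AddSubgroup.mem_sup]
  constructor
  · rintro ⟨p, hp, qq, hq, rfl⟩
    obtain ⟨c, rfl⟩ := mem_Qg.mp hq
    exact ⟨p, hp, c, rfl⟩
  · rintro ⟨p, hp, c, rfl⟩
    exact ⟨p, hp, _, mem_Qg.mpr ⟨c, rfl⟩, rfl⟩

section hyps

variable {f : R →+* A} {x : A}

/-- push `f s` from left of `x^n` to the right. -/
lemma sigma_ex (hx1 : ∀ r, ∃ r', x * f r = f r' * x) (n : ℕ) (s : R) : ∃ t, f t * x ^ n = x ^ n * f s := by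
  induction n with
  | zero => exact ⟨s, by simp⟩
  | succ n ih =>
    obtain ⟨t, ht⟩ := ih
    obtain ⟨t', ht'⟩ := hx1 t
    refine ⟨t', ?_⟩
    rw [pow_succ']  -- x ^ (n+1) = x * x ^ n
    calc f t' * (x * x ^ n) = (f t' * x) * x ^ n := by rw [mul_assoc]
      _ = (x * f t) * x ^ n := by rw [ht']
      _ = x * (f t * x ^ n) := by rw [mul_assoc]
      _ = x * (x ^ n * f s) := by rw [ht]
      _ = (x * x ^ n) * f s := by rw [mul_assoc]

/-- push `f s` from right of `x^n` to the left... other direction. -/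
lemma tau_ex (hx2 : ∀ r, ∃ r', f r * x = x * f r') (n : ℕ) (s : R) : ∃ t, f s * x ^ n = x ^ n * f t := by
  induction n with
  | zero => exact ⟨s, by simp⟩
  | succ n ih =>
    obtain ⟨t, ht⟩ := ih
    obtain ⟨t', ht'⟩ := hx2 t
    refine ⟨t', ?_⟩
    rw [pow_succ]  -- x ^ (n+1) = x ^ n * x
    calc f s * (x ^ n * x) = (f s * x ^ n) * x := by rw [mul_assoc]
      _ = (x ^ n * f t) * x := by rw [ht]
      _ = x ^ n * (f t * x) := by rw [mul_assoc]
      _ = x ^ n * (x * f t') := by rw [ht']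
      _ = (x ^ n * x) * f t' := by rw [mul_assoc]

lemma fmul_P (hx2 : ∀ r, ∃ r', f r * x = x * f r') (n : ℕ) (c : R) {a : A} (ha : a ∈ P f x n) : f c * a ∈ P f x n := by
  induction n generalizing a with
  | zero =>
    rw [P, AddSubgroup.mem_bot] at ha ⊢
    rw [ha, mul_zero]
  | succ n ih =>
    obtain ⟨p, hp, d, rfl⟩ := mem_P_succ.mp ha
    obtain ⟨t, ht⟩ := tau_ex hx2 n c
    refine mem_P_succ.mpr ⟨f c * p, ih hp, t * d, ?_⟩
    rw [mul_add, map_mul, ← mul_assoc, ← ht, mul_assoc]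

lemma xmul_P (n : ℕ) {a : A} (ha : a ∈ P f x n) : x * a ∈ P f x (n + 1) := by
  induction n generalizing a with
  | zero =>
    rw [P, AddSubgroup.mem_bot] at ha
    rw [ha, mul_zero]; exact zero_mem _
  | succ n ih =>
    obtain ⟨p, hp, d, rfl⟩ := mem_P_succ.mp ha
    refine mem_P_succ.mpr ⟨x * p, ih hp, d, ?_⟩
    rw [mul_add, ← mul_assoc, ← pow_succ']

lemma xpow_mul_P (k n : ℕ) {a : A} (ha : a ∈ P f x n) : x ^ k * a ∈ P f x (n + k) := by
  induction k with
  | zero => simpa using ha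
  | succ k ih =>
    have := xmul_P (n + k) ih
    rw [← mul_assoc, ← pow_succ'] at this
    exact this

lemma mul_P (hx2 : ∀ r, ∃ r', f r * x = x * f r') {n m : ℕ} {a b : A} (ha : a ∈ P f x n) (hb : b ∈ P f x m) :
    a * b ∈ P f x (n + m) := by
  induction n generalizing a with
  | zero =>
    rw [P, AddSubgroup.mem_bot] at ha
    rw [ha, zero_mul]; exact zero_mem _
  | succ n ih =>
    obtain ⟨p, hp, c, rfl⟩ := mem_P_succ.mp ha
    rw [add_mul, mul_assoc]
    refine add_mem (P_mono f x (by omega) (ih hp)) ?_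
    have h1 : f c * b ∈ P f x m := fmul_P hx2 m c hb
    have h2 := xpow_mul_P n (m) h1
    rw [add_comm m n] at h2
    exact P_mono f x (by omega) h2

end hyps


/-- Leading coefficient ideal (with coefficient written on the right of `x^n`). -/
def NI {f : R →+* A} {x : A} (hx1 : ∀ r, ∃ r', x * f r = f r' * x)
    (hx2 : ∀ r, ∃ r', f r * x = x * f r') (I : Ideal A) (n : ℕ) : Ideal R where
  carrier := {r | ∃ g ∈ I, g - x ^ n * f r ∈ P f x n}
  zero_mem' := ⟨0, I.zero_mem, by simpa using zero_mem (P f x n)⟩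
  add_mem' := by
    rintro a b ⟨g, hg, hgp⟩ ⟨h, hh, hhp⟩
    refine ⟨g + h, I.add_mem hg hh, ?_⟩
    have := (P f x n).add_mem hgp hhp
    have e : g + h - x ^ n * f (a + b) = g - x ^ n * f a + (h - x ^ n * f b) := by
      rw [map_add, mul_add]; abel
    rw [e]; exact this
  smul_mem' := by
    rintro s r ⟨g, hg, hgp⟩
    obtain ⟨t, ht⟩ := sigma_ex hx1 n s
    refine ⟨f t * g, I.mul_mem_left _ hg, ?_⟩
    have h2 : f t * (g - x ^ n * f r) ∈ P f x n := fmul_P hx2 n t hgp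
    have e : f t * g - x ^ n * f (s • r) = f t * (g - x ^ n * f r) := by
      rw [mul_sub, smul_eq_mul, map_mul, ← mul_assoc, ← ht, mul_assoc]
    rw [e]; exact h2

lemma mem_NI {f : R →+* A} {x : A} {hx1 : ∀ r, ∃ r', x * f r = f r' * x}
    {hx2 : ∀ r, ∃ r', f r * x = x * f r'} {I : Ideal A} {n : ℕ} {r : R} :
    r ∈ NI hx1 hx2 I n ↔ ∃ g ∈ I, g - x ^ n * f r ∈ P f x n := Iff.rfl

lemma NI_le_succ {f : R →+* A} {x : A} (hx1 : ∀ r, ∃ r', x * f r = f r' * x)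
    (hx2 : ∀ r, ∃ r', f r * x = x * f r') (I : Ideal A) (n : ℕ) :
    NI hx1 hx2 I n ≤ NI hx1 hx2 I (n + 1) := by
  rintro r ⟨g, hg, hgp⟩
  refine ⟨x * g, I.mul_mem_left _ hg, ?_⟩
  have := xmul_P n hgp
  have e : x * g - x ^ (n + 1) * f r = x * (g - x ^ n * f r) := by
    rw [mul_sub, ← mul_assoc, ← pow_succ']
  rw [e]; exact this

lemma NI_mono_ideal {f : R →+* A} {x : A} (hx1 : ∀ r, ∃ r', x * f r = f r' * x)
    (hx2 : ∀ r, ∃ r', f r * x = x * f r') {I J : Ideal A} (hIJ : I ≤ J) (n : ℕ) :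
    NI hx1 hx2 I n ≤ NI hx1 hx2 J n := by
  rintro r ⟨g, hg, hgp⟩
  exact ⟨g, hIJ hg, hgp⟩

/-- Every element lies in some piece of the filtration, given generation. -/
lemma exists_mem_P {f : R →+* A} {x : A}
    (hx2 : ∀ r, ∃ r', f r * x = x * f r')
    (hgen : Subring.closure (Set.range ⇑f ∪ {x}) = ⊤) (a : A) :
    ∃ n, a ∈ P f x n := by
  let U : Subring A :=
    { carrier := {a | ∃ n, a ∈ P f x n}
      zero_mem' := ⟨0, zero_mem _⟩
      one_mem' := ⟨1, mem_P_succ.mpr ⟨0, zero_mem _, 1, by simp⟩⟩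
      add_mem' := by
        rintro a b ⟨n, hn⟩ ⟨k, hk⟩
        exact ⟨max n k, add_mem (P_mono f x (le_max_left n k) hn)
          (P_mono f x (le_max_right n k) hk)⟩
      neg_mem' := by rintro a ⟨n, hn⟩; exact ⟨n, neg_mem hn⟩
      mul_mem' := by
        rintro a b ⟨n, hn⟩ ⟨k, hk⟩
        exact ⟨n + k, mul_P hx2 hn hk⟩ }
  have hU : Subring.closure (Set.range ⇑f ∪ {x}) ≤ U := by
    rw [Subring.closure_le]
    rintro a (⟨c, rfl⟩ | rfl)
    · exact ⟨1, mem_P_succ.mpr ⟨0, zero_mem _, c, by simp⟩⟩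
    · exact ⟨2, mem_P_succ.mpr ⟨0, zero_mem _, 1, by simp⟩⟩
  exact hU (hgen ▸ Subring.mem_top a)

/-- Core: skew Hilbert basis theorem for a normalising element. -/
theorem core {f : R →+* A} {x : A} (hR : IsNoetherianRing R)
    (hx1 : ∀ r, ∃ r', x * f r = f r' * x)
    (hx2 : ∀ r, ∃ r', f r * x = x * f r')
    (hgen : Subring.closure (Set.range ⇑f ∪ {x}) = ⊤) :
    IsNoetherianRing A := by
  classical
  rw [isNoetherianRing_iff_ideal_fg]
  intro I
  have hRM : IsNoetherian R R := hR
  set N : ℕ → Ideal R := fun n => NI hx1 hx2 I n with hNdef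
  have hNmono : Monotone N := monotone_nat_of_le_succ (NI_le_succ hx1 hx2 I)
  obtain ⟨n₀, hn₀⟩ := monotone_stabilizes_iff_noetherian.mpr hRM ⟨N, hNmono⟩
  -- finite generating sets for each N n
  have hfg : ∀ n, (N n).FG := fun n => IsNoetherian.noetherian _
  choose T hT using hfg
  have hTsub : ∀ n, ∀ r ∈ T n, r ∈ N n := fun n r hr => (hT n) ▸ Ideal.subset_span hr
  -- witness elements
  let w : ℕ → R → A := fun n r =>
    if h : r ∈ N n then h.choose else 0
  have hwI : ∀ n r, r ∈ N n → w n r ∈ I := by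
    intro n r h
    simp only [w, dif_pos h]
    exact h.choose_spec.1
  have hwP : ∀ n r, (h : r ∈ N n) → w n r - x ^ n * f r ∈ P f x n := by
    intro n r h
    simp only [w, dif_pos h]
    exact h.choose_spec.2
  set G : Finset A := (Finset.range (n₀ + 1)).biUnion (fun n => (T n).image (w n)) with hG
  set J : Ideal A := Ideal.span ↑G with hJ
  have hJI : J ≤ I := by
    rw [hJ, Ideal.span_le]
    intro a ha
    simp only [hG, Finset.coe_biUnion, Finset.coe_image, Set.mem_iUnion, Finset.mem_range,
      Set.mem_image, Finset.mem_coe] at ha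
    obtain ⟨n, _, r, hr, rfl⟩ := ha
    exact hwI n r (hTsub n r hr)
  -- key: leading coefficients of I are captured by J at every level
  have key : ∀ n, N n ≤ NI hx1 hx2 J n := by
    intro n
    have hmin : N n = N (min n n₀) := by
      rcases le_total n n₀ with h | h
      · rw [min_eq_left h]
      · rw [min_eq_right h]
        exact (hn₀ n h).symm
    rw [hmin, ← hT (min n n₀), Ideal.span_le]
    intro r hr
    have hrN : r ∈ N (min n n₀) := hTsub _ r hr
    refine ⟨x ^ (n - min n n₀) * w (min n n₀) r, ?_, ?_⟩
    · apply J.mul_mem_left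
      rw [hJ]
      apply Ideal.subset_span
      simp only [hG, Finset.coe_biUnion, Finset.coe_image, Set.mem_iUnion, Finset.mem_range,
        Set.mem_image, Finset.mem_coe]
      exact ⟨min n n₀, by omega, r, hr, rfl⟩
    · have h1 := xpow_mul_P (n - min n n₀) (min n n₀) (hwP _ r hrN)
      have e1 : min n n₀ + (n - min n n₀) = n := by omega
      rw [e1] at h1
      have e2 : x ^ (n - min n n₀) * (w (min n n₀) r - x ^ (min n n₀) * f r)
          = x ^ (n - min n n₀) * w (min n n₀) r - x ^ n * f r := by
        rw [mul_sub, ← mul_assoc, ← pow_add]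
        congr 3
        omega
      rw [e2] at h1
      exact h1
  -- main induction : I ∩ P n ⊆ J
  have main : ∀ n, ∀ a, a ∈ I → a ∈ P f x n → a ∈ J := by
    intro n
    induction n with
    | zero =>
      intro a _ ha
      rw [P, AddSubgroup.mem_bot] at ha
      rw [ha]; exact J.zero_mem
    | succ n ih =>
      intro a haI haP
      obtain ⟨p, hp, r, hpr⟩ := mem_P_succ.mp haP
      have hrN : r ∈ N n := ⟨a, haI, by rw [← hpr]; simpa using hp⟩
      obtain ⟨h, hhJ, hhP⟩ := key n hrN
      have hsub : a - h ∈ P f x n := by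
        have : a - h = (a - x ^ n * f r) - (h - x ^ n * f r) := by abel
        rw [this]
        exact sub_mem (by rw [← hpr]; simpa using hp) hhP
      have : a - h ∈ J := ih (a - h) (sub_mem haI (hJI hhJ)) hsub
      have := J.add_mem this hhJ
      simpa using this
  refine ⟨G, ?_⟩
  rw [← hJ]
  apply le_antisymm hJI
  intro a ha
  obtain ⟨n, hn⟩ := exists_mem_P hx2 hgen a
  exact main n a ha hn


variable {B : Type*}

/-- Adjoining a normalising element to a Noetherian subring keeps it Noetherian. -/
theorem step [Ring B] (S : Subring B) (hS : IsNoetherianRing S) (y : B)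
    (h1 : ∀ a ∈ S, ∃ b ∈ S, y * a = b * y)
    (h2 : ∀ a ∈ S, ∃ b ∈ S, a * y = y * b) :
    IsNoetherianRing (Subring.closure ((S : Set B) ∪ {y})) := by
  set S' := Subring.closure ((S : Set B) ∪ {y}) with hS'
  have hSle : S ≤ S' := fun a ha => Subring.subset_closure (Or.inl ha)
  have hy : y ∈ S' := Subring.subset_closure (Or.inr rfl)
  set f : S →+* S' := Subring.inclusion hSle with hf
  set Y : S' := ⟨y, hy⟩ with hY
  have hx1 : ∀ r : S, ∃ r' : S, Y * f r = f r' * Y := by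
    intro r
    obtain ⟨b, hb, hb2⟩ := h1 r r.2
    exact ⟨⟨b, hb⟩, Subtype.ext hb2⟩
  have hx2 : ∀ r : S, ∃ r' : S, f r * Y = Y * f r' := by
    intro r
    obtain ⟨b, hb, hb2⟩ := h2 r r.2
    exact ⟨⟨b, hb⟩, Subtype.ext hb2⟩
  have hgen : Subring.closure (Set.range ⇑f ∪ {Y}) = ⊤ := by
    rw [eq_top_iff]
    rintro ⟨a, ha⟩ -
    induction ha using Subring.closure_induction with
    | mem a h =>
      rcases h with h | h
      · exact Subring.subset_closure (Or.inl ⟨⟨a, h⟩, rfl⟩)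
      · exact Subring.subset_closure (Or.inr (by simp only [Set.mem_singleton_iff]; exact Subtype.ext h))
    | zero => exact zero_mem _
    | one => exact one_mem _
    | add a b ha hb iha ihb => exact add_mem iha ihb
    | neg a ha iha => exact neg_mem iha
    | mul a b ha hb iha ihb => exact mul_mem iha ihb
  exact core hS hx1 hx2 hgen


/-- Elements `a` such that `y * a ∈ S * y`. -/
def normLeft [Ring B] (S : Subring B) (y : B) : Subring B where
  carrier := {a | ∃ b ∈ S, y * a = b * y}
  zero_mem' := ⟨0, zero_mem _, by rw [mul_zero, zero_mul]⟩
  one_mem' := ⟨1, one_mem _, by rw [mul_one, one_mul]⟩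
  add_mem' := by
    rintro a a' ⟨b, hb, e⟩ ⟨b', hb', e'⟩
    exact ⟨b + b', add_mem hb hb', by rw [mul_add, add_mul, e, e']⟩
  neg_mem' := by
    rintro a ⟨b, hb, e⟩
    exact ⟨-b, neg_mem hb, by rw [mul_neg, neg_mul, e]⟩
  mul_mem' := by
    rintro a a' ⟨b, hb, e⟩ ⟨b', hb', e'⟩
    refine ⟨b * b', mul_mem hb hb', ?_⟩
    rw [← mul_assoc, e, mul_assoc, e', ← mul_assoc]

/-- Elements `a` such that `a * y ∈ y * S`. -/
def normRight [Ring B] (S : Subring B) (y : B) : Subring B where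
  carrier := {a | ∃ b ∈ S, a * y = y * b}
  zero_mem' := ⟨0, zero_mem _, by rw [mul_zero, zero_mul]⟩
  one_mem' := ⟨1, one_mem _, by rw [mul_one, one_mul]⟩
  add_mem' := by
    rintro a a' ⟨b, hb, e⟩ ⟨b', hb', e'⟩
    exact ⟨b + b', add_mem hb hb', by rw [add_mul, mul_add, e, e']⟩
  neg_mem' := by
    rintro a ⟨b, hb, e⟩
    exact ⟨-b, neg_mem hb, by rw [neg_mul, mul_neg, e]⟩
  mul_mem' := by
    rintro a a' ⟨b, hb, e⟩ ⟨b', hb', e'⟩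
    refine ⟨b * b', mul_mem hb hb', ?_⟩
    rw [mul_assoc, e', ← mul_assoc, e, mul_assoc]

lemma closure_coe_union [Ring B] (s t : Set B) :
    Subring.closure ((Subring.closure s : Subring B) ∪ t) = Subring.closure (s ∪ t) := by
  rw [Subring.closure_union, Subring.closure_union, Subring.closure_eq]

/-- Adjoining a list of central elements to a Noetherian subring. -/
theorem central_list [Ring B] (l : List B) (hc : ∀ c ∈ l, ∀ a : B, c * a = a * c)
    (S : Subring B) (hS : IsNoetherianRing S) :
    IsNoetherianRing (Subring.closure ((S : Set B) ∪ {a | a ∈ l})) := by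
  induction l generalizing S with
  | nil =>
    have e : (S : Set B) ∪ {a | a ∈ ([] : List B)} = (S : Set B) := by simp
    rw [e, Subring.closure_eq]
    exact hS
  | cons c l ih =>
    have hS2 := ih (fun d hd a => hc d (List.mem_cons_of_mem c hd) a) S hS
    set C := Subring.closure ((S : Set B) ∪ {a | a ∈ l}) with hC
    have hstep := step C hS2 c
      (fun a ha => ⟨a, ha, hc c List.mem_cons_self a⟩)
      (fun a ha => ⟨a, ha, (hc c List.mem_cons_self a).symm⟩)
    have e : Subring.closure ((C : Set B) ∪ {c}) =
        Subring.closure ((S : Set B) ∪ {a | a ∈ c :: l}) := by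
      rw [hC, closure_coe_union]
      congr 1
      ext a
      simp only [Set.mem_union, Set.mem_setOf_eq, List.mem_cons, Set.mem_singleton_iff]
      tauto
    rw [e] at hstep
    exact hstep


lemma central_unit_inv [Ring B] (u : Bˣ) (h : ∀ a, (u : B) * a = a * u) :
    ∀ a, ((u⁻¹ : Bˣ) : B) * a = a * ((u⁻¹ : Bˣ) : B) := by
  intro a
  calc ((u⁻¹ : Bˣ) : B) * a = ((u⁻¹ : Bˣ) : B) * (a * ((u : B) * ((u⁻¹ : Bˣ) : B))) := by
        rw [Units.mul_inv, mul_one]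
    _ = ((u⁻¹ : Bˣ) : B) * ((a * (u : B)) * ((u⁻¹ : Bˣ) : B)) := by rw [mul_assoc]
    _ = ((u⁻¹ : Bˣ) : B) * (((u : B) * a) * ((u⁻¹ : Bˣ) : B)) := by rw [h]
    _ = (((u⁻¹ : Bˣ) : B) * (u : B)) * (a * ((u⁻¹ : Bˣ) : B)) := by
        rw [mul_assoc, ← mul_assoc]
    _ = a * ((u⁻¹ : Bˣ) : B) := by rw [Units.inv_mul, one_mul]

end QComm


/-- **Noncommutative Hilbert basis theorem for q-commutative extensions.**
Let `B` be a Noetherian subring of a ring `A`, and suppose `A` is generated over `B`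
by elements `x 1, ..., x m` such that each `x i` normalises `B` (i.e. `x i * B = B * x i`
as sets) and for all `i ≤ j` there is a central unit `q i j` with
`x i * x j = q i j * (x j * x i)`.  Then `A` is Noetherian. -/
theorem q_commutative_noetherian
    {A : Type*} [Ring A] (B : Subring A) (hB : IsNoetherianRing B)
    (m : ℕ) (x : Fin m → A)
    (hgen : Subring.closure ((B : Set A) ∪ Set.range x) = ⊤)
    (hnorm : ∀ i : Fin m, (fun b => x i * b) '' (B : Set A) = (fun b => b * x i) '' (B : Set A))
    (q : Fin m → Fin m → Aˣ)
    (hqcentral : ∀ i j : Fin m, (q i j : A) ∈ Set.center A)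
    (hq : ∀ i j : Fin m, i ≤ j → x i * x j = (q i j : A) * (x j * x i)) :
    IsNoetherianRing A := by
  classical
  -- the list of central scalars (all `q i j` and their inverses)
  set pairs : List (Fin m × Fin m) := (List.finRange m) ×ˢ (List.finRange m) with hpairs
  set qs : List A := (pairs.map fun p => ((q p.1 p.2 : Aˣ) : A)) ++
      (pairs.map fun p => (((q p.1 p.2)⁻¹ : Aˣ) : A)) with hqs
  have hqcomm : ∀ i j : Fin m, ∀ a : A, (q i j : A) * a = a * (q i j : A) := by
    intro i j a
    exact ((Semigroup.mem_center_iff.mp (hqcentral i j)) a).symm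
  have hcentral : ∀ c ∈ qs, ∀ a : A, c * a = a * c := by
    intro c hc a
    rw [hqs, List.mem_append] at hc
    rcases hc with hc | hc
    · obtain ⟨p, hp, rfl⟩ := List.mem_map.mp hc
      exact hqcomm p.1 p.2 a
    · obtain ⟨p, hp, rfl⟩ := List.mem_map.mp hc
      exact QComm.central_unit_inv (q p.1 p.2) (hqcomm p.1 p.2) a
  have hmemq : ∀ i j : Fin m, ((q i j : Aˣ) : A) ∈ {a | a ∈ qs} := by
    intro i j
    rw [Set.mem_setOf_eq, hqs, List.mem_append]
    exact Or.inl (List.mem_map.mpr ⟨(i, j), by simp [hpairs], rfl⟩)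
  have hmemqinv : ∀ i j : Fin m, (((q i j)⁻¹ : Aˣ) : A) ∈ {a | a ∈ qs} := by
    intro i j
    rw [Set.mem_setOf_eq, hqs, List.mem_append]
    exact Or.inr (List.mem_map.mpr ⟨(i, j), by simp [hpairs], rfl⟩)
  -- main induction: adjoin `x 0, ..., x (k-1)`
  have claim : ∀ k, k ≤ m → IsNoetherianRing
      (Subring.closure ((B : Set A) ∪ {a | a ∈ qs} ∪ (x '' {i : Fin m | (i : ℕ) < k}))) := by
    intro k
    induction k with
    | zero =>
      intro _
      have e : (B : Set A) ∪ {a | a ∈ qs} ∪ (x '' {i : Fin m | (i : ℕ) < 0})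
          = (B : Set A) ∪ {a | a ∈ qs} := by
        have : {i : Fin m | (i : ℕ) < 0} = ∅ := by
          ext i; simp
        rw [this, Set.image_empty, Set.union_empty]
      rw [e]
      exact QComm.central_list qs hcentral B hB
    | succ k ih =>
      intro hk
      have hkm : k < m := hk
      have ih' := ih (le_of_lt hkm)
      set i₀ : Fin m := ⟨k, hkm⟩ with hi₀
      set Sk := Subring.closure ((B : Set A) ∪ {a | a ∈ qs} ∪ (x '' {i : Fin m | (i : ℕ) < k}))
        with hSk
      -- `x i₀` normalises `Sk`
      have hnl : Sk ≤ QComm.normLeft Sk (x i₀) := by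
        rw [hSk, Subring.closure_le]
        rintro a ((ha | ha) | ⟨i, hi, rfl⟩)
        · have h1 : x i₀ * a ∈ (fun b => x i₀ * b) '' (B : Set A) :=
            Set.mem_image_of_mem _ ha
          rw [hnorm i₀] at h1
          obtain ⟨b, hb, e⟩ := h1
          exact ⟨b, Subring.subset_closure (Or.inl (Or.inl hb)), e.symm⟩
        · exact ⟨a, Subring.subset_closure (Or.inl (Or.inr ha)), (hcentral a ha (x i₀)).symm⟩
        · have hle : i ≤ i₀ := by
            rw [Fin.le_def]
            simp only [hi₀]
            exact le_of_lt hi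
          have e := hq i i₀ hle
          refine ⟨((q i i₀)⁻¹ : Aˣ) * x i, ?_, ?_⟩
          · exact mul_mem (Subring.subset_closure (Or.inl (Or.inr (hmemqinv i i₀))))
              (Subring.subset_closure (Or.inr ⟨i, hi, rfl⟩))
          · rw [mul_assoc, e, ← mul_assoc, Units.inv_mul, one_mul]
      have hnr : Sk ≤ QComm.normRight Sk (x i₀) := by
        rw [hSk, Subring.closure_le]
        rintro a ((ha | ha) | ⟨i, hi, rfl⟩)
        · have h1 : a * x i₀ ∈ (fun b => b * x i₀) '' (B : Set A) :=
            Set.mem_image_of_mem _ ha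
          rw [← hnorm i₀] at h1
          obtain ⟨b, hb, e⟩ := h1
          exact ⟨b, Subring.subset_closure (Or.inl (Or.inl hb)), e.symm⟩
        · exact ⟨a, Subring.subset_closure (Or.inl (Or.inr ha)), hcentral a ha (x i₀)⟩
        · have hle : i ≤ i₀ := by
            rw [Fin.le_def]
            simp only [hi₀]
            exact le_of_lt hi
          have e := hq i i₀ hle
          refine ⟨(q i i₀ : Aˣ) * x i, ?_, ?_⟩
          · exact mul_mem (Subring.subset_closure (Or.inl (Or.inr (hmemq i i₀))))
              (Subring.subset_closure (Or.inr ⟨i, hi, rfl⟩))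
          · calc x i * x i₀ = (q i i₀ : A) * (x i₀ * x i) := e
              _ = ((q i i₀ : A) * x i₀) * x i := by rw [mul_assoc]
              _ = (x i₀ * (q i i₀ : A)) * x i := by rw [hqcomm i i₀ (x i₀)]
              _ = x i₀ * ((q i i₀ : A) * x i) := by rw [mul_assoc]
      have hstep := QComm.step Sk ih' (x i₀) (fun a ha => hnl ha) (fun a ha => hnr ha)
      have e : Subring.closure ((Sk : Set A) ∪ {x i₀}) =
          Subring.closure ((B : Set A) ∪ {a | a ∈ qs}
            ∪ (x '' {i : Fin m | (i : ℕ) < k + 1})) := by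
        rw [hSk, QComm.closure_coe_union]
        congr 1
        ext a
        simp only [Set.mem_union, Set.mem_singleton_iff, Set.mem_image, Set.mem_setOf_eq]
        constructor
        · rintro (((h | h) | ⟨i, hi, rfl⟩) | rfl)
          · exact Or.inl (Or.inl h)
          · exact Or.inl (Or.inr h)
          · exact Or.inr ⟨i, by omega, rfl⟩
          · exact Or.inr ⟨i₀, by simp [hi₀], rfl⟩
        · rintro ((h | h) | ⟨i, hi, rfl⟩)
          · exact Or.inl (Or.inl (Or.inl h))
          · exact Or.inl (Or.inl (Or.inr h))
          · by_cases hik : (i : ℕ) < k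
            · exact Or.inl (Or.inr ⟨i, hik, rfl⟩)
            · have : i = i₀ := by
                apply Fin.ext
                simp only [hi₀]
                omega
              rw [this]
              exact Or.inr rfl
      rw [e] at hstep
      exact hstep
  have h3 := claim m le_rfl
  have e : Subring.closure ((B : Set A) ∪ {a | a ∈ qs} ∪ (x '' {i : Fin m | (i : ℕ) < m})) = ⊤ := by
    rw [eq_top_iff, ← hgen]
    apply Subring.closure_mono
    rintro a (ha | ⟨i, rfl⟩)
    · exact Or.inl (Or.inl ha)
    · exact Or.inr ⟨i, i.isLt, rfl⟩
  rw [e] at h3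
  haveI := h3
  exact isNoetherianRing_of_surjective (⊤ : Subring A) A
    (Subring.topEquiv : (⊤ : Subring A) ≃+* A).toRingHom Subring.topEquiv.surjective
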